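/- Let f : ℝ → ℝ be differentiable on ℝ, let α be a root of f (f(α) = 0), and let x_{n−1}, x_n ∈ ℝ satisfy x_{n−1} ≠ α, x_n ≠ α, and f(x_n) ≠ f(x_{n−1}). Define x_{n+1} = x_n − f(x_n)·(x_n − x_{n−1}) / (f(x_n) − f(x_{n−1})) and set e_k = x_k − α for k ∈ {n−1, n, n+1}. Then there exist β_n strictly between α and x_n and β_{n−1} strictly between α and x_{n−1} such that e_{n+1} = e_n · e_{n−1} · (f'(β_n) − f'(β_{n−1})) / (f(x_n) − f(x_{n−1})); in particular the secant-method error at the new step is proportional to the product of the two previous errors. -/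

import Mathlib

lemma secant_aux_mvt (f : ℝ → ℝ) (hf : Differentiable ℝ f) (α x : ℝ)
    (hroot : f α = 0) (hx : x ≠ α) :
    ∃ β ∈ Set.Ioo (min α x) (max α x), f x = (x - α) * deriv f β := by
  rcases lt_or_gt_of_ne hx with h | h
  · obtain ⟨c, hc, hc'⟩ := exists_deriv_eq_slope f h hf.continuous.continuousOn
      (fun y _ => (hf y).differentiableWithinAt)
    refine ⟨c, by simpa [min_eq_right h.le, max_eq_left h.le] using hc, ?_⟩
    have hax : α - x ≠ 0 := sub_ne_zero.mpr h.ne'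
    rw [hc', hroot]
    field_simp
    ring
  · obtain ⟨c, hc, hc'⟩ := exists_deriv_eq_slope f h hf.continuous.continuousOn
      (fun y _ => (hf y).differentiableWithinAt)
    refine ⟨c, by simpa [min_eq_left h.le, max_eq_right h.le] using hc, ?_⟩
    have hax : x - α ≠ 0 := sub_ne_zero.mpr h.ne'
    rw [hc', hroot]
    field_simp
    ring

/-- Mean-value form of the secant-method error: if `f` is differentiable,
`f α = 0`, `x_{n-1} ≠ α`, `x_n ≠ α`, `f(x_n) ≠ f(x_{n-1})`, and `x_{n+1}` is the
secant update, then there exist `βn` strictly between `α` and `x_n` and `βnm1`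
strictly between `α` and `x_{n-1}` such that
`e_{n+1} = e_n e_{n-1} (f'(βn) - f'(βnm1)) / (f(x_n) - f(x_{n-1}))`,
where `e_k = x_k - α`. -/
theorem secant_error_mvt_identity (f : ℝ → ℝ) (hf : Differentiable ℝ f)
    (α xnm1 xn : ℝ) (hroot : f α = 0)
    (hxnm1 : xnm1 ≠ α) (hxn : xn ≠ α) (hne : f xn ≠ f xnm1)
    (xnp1 : ℝ)
    (hupdate : xnp1 = xn - f xn * (xn - xnm1) / (f xn - f xnm1))
    (enm1 en enp1 : ℝ)
    (henm1 : enm1 = xnm1 - α) (hen : en = xn - α) (henp1 : enp1 = xnp1 - α) :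
    ∃ βn ∈ Set.Ioo (min α xn) (max α xn),
      ∃ βnm1 ∈ Set.Ioo (min α xnm1) (max α xnm1),
        enp1 = en * enm1 * (deriv f βn - deriv f βnm1) / (f xn - f xnm1) := by
  obtain ⟨βn, hβn, h1⟩ := secant_aux_mvt f hf α xn hroot hxn
  obtain ⟨βm, hβm, h2⟩ := secant_aux_mvt f hf α xnm1 hroot hxnm1
  refine ⟨βn, hβn, βm, hβm, ?_⟩
  have hD : f xn - f xnm1 ≠ 0 := sub_ne_zero.mpr hne
  subst henp1 hupdate hen henm1
  rw [h1, h2] at *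
  field_simp
  ring
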